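/- For every norm ⦀·⦀ on ℝ^d, the sequence of coordinate-k norms is decreasingly graded with respect to the ℓ0 pseudonorm: it is nonincreasing in k, and for every l ∈ {1,…,d} and every x ∈ ℝ^d, if ℓ0(x) ≤ l then ⦀x⦀_l = ⦀x⦀. -/

import Mathlib

open scoped BigOperators

noncomputable section

/-- The Euclidean pairing `⟨x,y⟩ = ∑ i, x i * y i` on `Fin d → ℝ`. -/
def dotp {d : ℕ} (x y : Fin d → ℝ) : ℝ := ∑ i, x i * y i

/-- The coordinate subspace `R_K` of vectors vanishing outside `K`. -/
def RK {d : ℕ} (K : Finset (Fin d)) : Set (Fin d → ℝ) := {x | ∀ j ∉ K, x j = 0}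

/-- Orthogonal projection onto `R_K`. -/
def projK {d : ℕ} (K : Finset (Fin d)) (x : Fin d → ℝ) : Fin d → ℝ :=
  fun i => if i ∈ K then x i else 0

/-- The ℓ0 pseudonorm: number of nonzero components. -/
def ell0 {d : ℕ} (x : Fin d → ℝ) : ℕ := (Function.support x).ncard

/-- `N` is a norm on `ℝ^d`. -/
structure IsNorm {d : ℕ} (N : (Fin d → ℝ) → ℝ) : Prop where
  eq_zero_iff : ∀ x, N x = 0 ↔ x = 0
  smul : ∀ (c : ℝ) (x : Fin d → ℝ), N (c • x) = |c| * N x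
  triangle : ∀ x y, N (x + y) ≤ N x + N y

/-- `⦀y⦀_{K,★}`: the dual norm (w.r.t. the Euclidean pairing), on the subspace `R_K`,
of the restriction of `N` to `R_K`. -/
def restStar {d : ℕ} (N : (Fin d → ℝ) → ℝ) (K : Finset (Fin d)) (y : Fin d → ℝ) : ℝ :=
  sSup {r | ∃ x ∈ RK K, N x ≤ 1 ∧ r = dotp x y}

/-- The dual coordinate-k norm `⦀y⦀_{k,★} = sup_{|K| ≤ k} ⦀y_K⦀_{K,★}`. -/
def dualCoord {d : ℕ} (N : (Fin d → ℝ) → ℝ) (k : ℕ) (y : Fin d → ℝ) : ℝ :=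
  sSup {r | ∃ K : Finset (Fin d), K.card ≤ k ∧ r = restStar N K (projK K y)}

/-- The coordinate-k norm: the dual norm of the dual coordinate-k norm. -/
def coordNorm {d : ℕ} (N : (Fin d → ℝ) → ℝ) (k : ℕ) (x : Fin d → ℝ) : ℝ :=
  sSup {r | ∃ y : Fin d → ℝ, dualCoord N k y ≤ 1 ∧ r = dotp x y}

variable {d : ℕ} {N : (Fin d → ℝ) → ℝ}

lemma IsNorm.zero (hN : IsNorm N) : N 0 = 0 := (hN.eq_zero_iff 0).2 rfl

lemma IsNorm.negEq (hN : IsNorm N) (x : Fin d → ℝ) : N (-x) = N x := by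
  have := hN.smul (-1) x; simpa using this

lemma IsNorm.nonneg (hN : IsNorm N) (x : Fin d → ℝ) : 0 ≤ N x := by
  have h := hN.triangle x (-x)
  rw [add_neg_cancel, hN.zero, hN.negEq] at h
  linarith

def WithNorm (d : ℕ) (N : (Fin d → ℝ) → ℝ) : Type := Fin d → ℝ

instance : AddCommGroup (WithNorm d N) := inferInstanceAs (AddCommGroup (Fin d → ℝ))
instance : Module ℝ (WithNorm d N) := inferInstanceAs (Module ℝ (Fin d → ℝ))

lemma exists_bound (hN : IsNorm N) :
    ∃ C : ℝ, 0 ≤ C ∧ ∀ u : Fin d → ℝ, N u ≤ 1 → ∀ i, |u i| ≤ C := by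
  letI nacg : NormedAddCommGroup (WithNorm d N) := AddGroupNorm.toNormedAddCommGroup
    { toFun := N
      map_zero' := hN.zero
      add_le' := hN.triangle
      neg' := hN.negEq
      eq_zero_of_map_eq_zero' := fun x h => (hN.eq_zero_iff x).1 h }
  letI : NormedSpace ℝ (WithNorm d N) := ⟨fun c x => le_of_eq (hN.smul c x)⟩
  haveI : FiniteDimensional ℝ (WithNorm d N) :=
    inferInstanceAs (FiniteDimensional ℝ (Fin d → ℝ))
  let e : WithNorm d N ≃ₗ[ℝ] (Fin d → ℝ) :=
    { toFun := fun v => v, invFun := fun v => v, map_add' := fun _ _ => rfl,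
      map_smul' := fun _ _ => rfl, left_inv := fun _ => rfl, right_inv := fun _ => rfl }
  let e' := e.toContinuousLinearEquiv
  set L : WithNorm d N →L[ℝ] (Fin d → ℝ) := (e' : WithNorm d N →L[ℝ] (Fin d → ℝ)) with hL
  refine ⟨max ‖L‖ 0, le_max_right _ _, fun u hu i => ?_⟩
  have h1 : ‖L u‖ ≤ ‖L‖ * @norm (WithNorm d N) _ u := ContinuousLinearMap.le_opNorm _ _
  have h2 : @norm (WithNorm d N) _ u = N u := rfl
  have h3 : L u = u := rfl
  have h4 : |u i| ≤ ‖(u : Fin d → ℝ)‖ := by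
    simpa [Real.norm_eq_abs] using norm_le_pi_norm u i
  have h5 : (0:ℝ) ≤ ‖L‖ := norm_nonneg _
  calc |u i| ≤ ‖(u : Fin d → ℝ)‖ := h4
    _ ≤ ‖L‖ * N u := by rw [← h2, ← h3]; exact h1
    _ ≤ ‖L‖ * 1 := mul_le_mul_of_nonneg_left hu h5
    _ ≤ max ‖L‖ 0 := by rw [mul_one]; exact le_max_left _ _

lemma exists_support_functional (hN : IsNorm N) (x : Fin d → ℝ) (hx : x ≠ 0) :
    ∃ y : Fin d → ℝ, dotp x y = N x ∧ ∀ u, dotp u y ≤ N u := by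
  letI nacg : NormedAddCommGroup (WithNorm d N) := AddGroupNorm.toNormedAddCommGroup
    { toFun := N
      map_zero' := hN.zero
      add_le' := hN.triangle
      neg' := hN.negEq
      eq_zero_of_map_eq_zero' := fun x h => (hN.eq_zero_iff x).1 h }
  letI : NormedSpace ℝ (WithNorm d N) := ⟨fun c x => le_of_eq (hN.smul c x)⟩
  obtain ⟨g, hg1, hgx⟩ := exists_dual_vector (E := WithNorm d N) ℝ x (fun h => hx ((hN.eq_zero_iff x).1 h))
  set sing : Fin d → (Fin d → ℝ) := fun i => Pi.single i (1:ℝ) with hsing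
  have key : ∀ u : Fin d → ℝ, dotp u (fun i => g (sing i)) = g u := by
    intro u
    have h1 : ∀ i : Fin d, u i * g (sing i) = g (u i • sing i) := by
      intro i
      have := g.map_smul (u i) (show WithNorm d N from sing i)
      rw [smul_eq_mul] at this
      exact this.symm
    have h2 : (∑ i, u i • sing i) = u := by
      funext j
      simp [hsing, Finset.sum_apply, Pi.single_apply]
    calc dotp u _ = ∑ i, g (u i • sing i) := by
          unfold dotp; exact Finset.sum_congr rfl fun i _ => h1 i
      _ = g (∑ i, u i • sing i) := by exact (map_sum g (fun i => (show WithNorm d N from u i • sing i)) Finset.univ).symm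
      _ = g u := by exact congrArg g h2
  refine ⟨fun i => g (sing i), ?_, ?_⟩
  · rw [key x]
    exact_mod_cast hgx
  · intro u
    rw [key u]
    have h6 := g.le_opNorm u
    rw [Real.norm_eq_abs, hg1, one_mul] at h6
    have h7 : |g u| ≤ N u := by exact h6
    exact le_trans (le_abs_self _) h7

theorem statement7 {d : ℕ} (N : (Fin d → ℝ) → ℝ) (hN : IsNorm N) :
    (∀ (x : Fin d → ℝ) (k l : ℕ), 1 ≤ k → k ≤ l → l ≤ d →
        coordNorm N l x ≤ coordNorm N k x) ∧
      ∀ l : ℕ, 1 ≤ l → l ≤ d → ∀ x : Fin d → ℝ, ell0 x ≤ l → coordNorm N l x = N x := by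
  obtain ⟨C, hC0, hC⟩ := exists_bound hN
  -- basic facts about restStar
  have hdotp_le : ∀ u z : Fin d → ℝ, (∀ i, |u i| ≤ C) → dotp u z ≤ C * ∑ i, |z i| := by
    intro u z h
    calc dotp u z ≤ ∑ i, |u i * z i| := Finset.sum_le_sum fun i _ => le_abs_self _
      _ ≤ ∑ i, C * |z i| := Finset.sum_le_sum fun i _ => by
            rw [abs_mul]; exact mul_le_mul_of_nonneg_right (h i) (abs_nonneg _)
      _ = C * ∑ i, |z i| := by rw [Finset.mul_sum]
  have restSet_mem0 : ∀ (K : Finset (Fin d)) (z : Fin d → ℝ),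
      (0:ℝ) ∈ {r | ∃ x ∈ RK K, N x ≤ 1 ∧ r = dotp x z} := by
    intro K z
    exact ⟨0, fun j _ => rfl, by rw [hN.zero]; exact zero_le_one, by simp [dotp]⟩
  have restSet_bdd : ∀ (K : Finset (Fin d)) (z : Fin d → ℝ),
      BddAbove {r | ∃ x ∈ RK K, N x ≤ 1 ∧ r = dotp x z} := by
    intro K z
    refine ⟨C * ∑ i, |z i|, ?_⟩
    rintro r ⟨u, _, hNu, rfl⟩
    exact hdotp_le u z (hC u hNu)
  have rest_nonneg : ∀ (K : Finset (Fin d)) (z : Fin d → ℝ), 0 ≤ restStar N K z :=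
    fun K z => le_csSup (restSet_bdd K z) (restSet_mem0 K z)
  have rest_le : ∀ (K : Finset (Fin d)) (z : Fin d → ℝ), restStar N K z ≤ C * ∑ i, |z i| := by
    intro K z
    refine csSup_le ⟨0, restSet_mem0 K z⟩ ?_
    rintro r ⟨u, _, hNu, rfl⟩
    exact hdotp_le u z (hC u hNu)
  -- basic facts about dualCoord
  have proj_abs_le : ∀ (K : Finset (Fin d)) (y : Fin d → ℝ) (i : Fin d),
      |projK K y i| ≤ |y i| := by
    intro K y i
    by_cases h : i ∈ K <;> simp [projK, h, abs_nonneg]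
  have dual_mem : ∀ (k : ℕ) (y : Fin d → ℝ),
      restStar N ∅ (projK ∅ y) ∈
        {r | ∃ K : Finset (Fin d), K.card ≤ k ∧ r = restStar N K (projK K y)} :=
    fun k y => ⟨∅, by simp, rfl⟩
  have dual_bdd : ∀ (k : ℕ) (y : Fin d → ℝ),
      BddAbove {r | ∃ K : Finset (Fin d), K.card ≤ k ∧ r = restStar N K (projK K y)} := by
    intro k y
    refine ⟨C * ∑ i, |y i|, ?_⟩
    rintro r ⟨K, _, rfl⟩
    calc restStar N K (projK K y) ≤ C * ∑ i, |projK K y i| := rest_le K _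
      _ ≤ C * ∑ i, |y i| := by
          exact mul_le_mul_of_nonneg_left (Finset.sum_le_sum fun i _ => proj_abs_le K y i) hC0
  have proj_zero : ∀ K : Finset (Fin d), projK K (0 : Fin d → ℝ) = 0 := by
    intro K; funext i; simp [projK]
  have rest_zero : ∀ K : Finset (Fin d), restStar N K 0 = 0 := by
    intro K
    refine le_antisymm (csSup_le ⟨0, restSet_mem0 K 0⟩ ?_) (rest_nonneg K 0)
    rintro r ⟨u, _, _, rfl⟩
    simp [dotp]
  have dual_zero : ∀ k : ℕ, dualCoord N k 0 = 0 := by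
    intro k
    refine le_antisymm (csSup_le ⟨_, dual_mem k 0⟩ ?_) ?_
    · rintro r ⟨K, _, rfl⟩
      rw [proj_zero, rest_zero]
    · refine le_csSup (dual_bdd k 0) ⟨∅, by simp, ?_⟩
      rw [proj_zero, rest_zero]
  have coord_mem0 : ∀ (k : ℕ) (x : Fin d → ℝ),
      (0:ℝ) ∈ {r | ∃ y, dualCoord N k y ≤ 1 ∧ r = dotp x y} := by
    intro k x
    exact ⟨0, by rw [dual_zero]; exact zero_le_one, by simp [dotp]⟩
  -- bound on y with dualCoord ≤ 1
  have single_ne : ∀ i : Fin d, (Pi.single i (1:ℝ) : Fin d → ℝ) ≠ 0 := by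
    intro i h
    have := congrFun h i
    rw [Pi.single_eq_same] at this
    simp at this
  have single_pos : ∀ i : Fin d, 0 < N (Pi.single i (1:ℝ)) := by
    intro i
    rcases lt_or_eq_of_le (hN.nonneg (Pi.single i 1)) with h | h
    · exact h
    · exact absurd ((hN.eq_zero_iff _).1 h.symm) (single_ne i)
  have ybound : ∀ k : ℕ, 1 ≤ k → ∀ y : Fin d → ℝ, dualCoord N k y ≤ 1 →
      ∀ i, |y i| ≤ N (Pi.single i (1:ℝ)) := by
    intro k hk y hy i
    set m := N (Pi.single i (1:ℝ)) with hm
    have hmpos := single_pos i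
    set s : ℝ := if y i < 0 then -1 else 1 with hs
    have hsabs : |s| = 1 := by
      rw [hs]; split <;> simp
    have hp : ∃ p : Fin d → ℝ, p = Pi.single i (1:ℝ) := ⟨_, rfl⟩
    set u : Fin d → ℝ := (s * m⁻¹) • (Pi.single i (1:ℝ) : Fin d → ℝ) with hu
    have hNu : N u ≤ 1 := by
      rw [hu, hN.smul, abs_mul, hsabs, one_mul, abs_of_nonneg (inv_nonneg.2 hmpos.le), ← hm,
        inv_mul_cancel₀ hmpos.ne']
    have huK : u ∈ RK ({i} : Finset (Fin d)) := by
      intro j hj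
      rw [Finset.mem_singleton] at hj
      rw [hu]
      simp [Pi.single_eq_of_ne hj]
    have hdot : dotp u (projK {i} y) = m⁻¹ * |y i| := by
      rw [dotp]
      rw [Finset.sum_eq_single i]
      · have h1 : u i = s * m⁻¹ := by rw [hu]; simp
        have h2 : projK {i} y i = y i := by simp [projK]
        rw [h1, h2]
        rw [hs]
        split
        · rename_i hneg
          rw [abs_of_neg hneg]; ring
        · rename_i hpos
          rw [abs_of_nonneg (le_of_not_gt hpos)]; ring
      · intro j _ hj
        have : u j = 0 := huK j (by simpa using hj)
        rw [this, zero_mul]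
      · intro h; exact absurd (Finset.mem_univ i) h
    have step1 : m⁻¹ * |y i| ≤ restStar N ({i} : Finset (Fin d)) (projK {i} y) :=
      le_csSup (restSet_bdd _ _) ⟨u, huK, hNu, hdot.symm⟩
    have step2 : restStar N ({i} : Finset (Fin d)) (projK {i} y) ≤ dualCoord N k y :=
      le_csSup (dual_bdd k y) ⟨{i}, by simpa using hk, rfl⟩
    have : m⁻¹ * |y i| ≤ 1 := le_trans step1 (le_trans step2 hy)
    calc |y i| = m * (m⁻¹ * |y i|) := by
          rw [← mul_assoc, mul_inv_cancel₀ hmpos.ne', one_mul]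
      _ ≤ m * 1 := mul_le_mul_of_nonneg_left this hmpos.le
      _ = m := mul_one m
  have coord_bdd : ∀ k : ℕ, 1 ≤ k → ∀ x : Fin d → ℝ,
      BddAbove {r | ∃ y, dualCoord N k y ≤ 1 ∧ r = dotp x y} := by
    intro k hk x
    refine ⟨∑ i, |x i| * N (Pi.single i (1:ℝ)), ?_⟩
    rintro r ⟨y, hy, rfl⟩
    calc dotp x y ≤ ∑ i, |x i * y i| := Finset.sum_le_sum fun i _ => le_abs_self _
      _ ≤ ∑ i, |x i| * N (Pi.single i (1:ℝ)) := Finset.sum_le_sum fun i _ => by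
          rw [abs_mul]
          exact mul_le_mul_of_nonneg_left (ybound k hk y hy i) (abs_nonneg _)
  constructor
  · -- monotonicity
    intro x k l hk hkl _
    have dual_mono : ∀ y : Fin d → ℝ, dualCoord N k y ≤ dualCoord N l y := by
      intro y
      refine csSup_le_csSup (dual_bdd l y) ⟨_, dual_mem k y⟩ ?_
      rintro r ⟨K, hK, rfl⟩
      exact ⟨K, hK.trans hkl, rfl⟩
    refine csSup_le_csSup (coord_bdd k hk x) ⟨0, coord_mem0 l x⟩ ?_
    rintro r ⟨y, hy, rfl⟩
    exact ⟨y, (dual_mono y).trans hy, rfl⟩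
  · -- graded part
    intro l hl _ x hx
    by_cases hx0 : x = 0
    · subst hx0
      rw [hN.zero]
      refine le_antisymm (csSup_le ⟨0, coord_mem0 l 0⟩ ?_)
        (le_csSup (coord_bdd l hl 0) (coord_mem0 l 0))
      rintro r ⟨y, _, rfl⟩
      simp [dotp]
    · have hNx : 0 < N x := by
        rcases lt_or_eq_of_le (hN.nonneg x) with h | h
        · exact h
        · exact absurd ((hN.eq_zero_iff x).1 h.symm) hx0
      set S : Finset (Fin d) := (Function.support x).toFinite.toFinset with hS
      have hScard : S.card ≤ l :=
        le_trans (le_of_eq (Set.ncard_eq_toFinset_card _ (Function.support x).toFinite).symm) hx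
      have hxS : ∀ j, j ∉ S → x j = 0 := by
        intro j hj
        by_contra h
        exact hj (by rw [hS]; exact (Set.Finite.mem_toFinset _).2 h)
      refine le_antisymm ?_ ?_
      · -- coordNorm ≤ N x
        refine csSup_le ⟨0, coord_mem0 l x⟩ ?_
        rintro r ⟨y, hy, rfl⟩
        set u : Fin d → ℝ := (N x)⁻¹ • x with hu
        have huK : u ∈ RK S := by
          intro j hj
          rw [hu]
          simp [hxS j hj]
        have hNu : N u ≤ 1 := by
          rw [hu, hN.smul, abs_of_nonneg (inv_nonneg.2 hNx.le), inv_mul_cancel₀ hNx.ne']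
        have hdot : dotp u (projK S y) = (N x)⁻¹ * dotp x y := by
          rw [dotp, dotp, Finset.mul_sum]
          refine Finset.sum_congr rfl ?_
          intro j _
          by_cases hj : j ∈ S
          · rw [hu]; simp [projK, hj]; ring
          · rw [hu]; simp [projK, hj, hxS j hj]
        have step1 : (N x)⁻¹ * dotp x y ≤ restStar N S (projK S y) :=
          le_csSup (restSet_bdd _ _) ⟨u, huK, hNu, hdot.symm⟩
        have step2 : restStar N S (projK S y) ≤ dualCoord N l y :=
          le_csSup (dual_bdd l y) ⟨S, hScard, rfl⟩
        have h1 : (N x)⁻¹ * dotp x y ≤ 1 := le_trans step1 (le_trans step2 hy)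
        calc dotp x y = N x * ((N x)⁻¹ * dotp x y) := by
              rw [← mul_assoc, mul_inv_cancel₀ hNx.ne', one_mul]
          _ ≤ N x * 1 := mul_le_mul_of_nonneg_left h1 hNx.le
          _ = N x := mul_one _
      · -- N x ≤ coordNorm
        obtain ⟨y, hxy, hy⟩ := exists_support_functional hN x hx0
        have hdual : dualCoord N l y ≤ 1 := by
          refine csSup_le ⟨_, dual_mem l y⟩ ?_
          rintro r ⟨K, _, rfl⟩
          refine csSup_le ⟨0, restSet_mem0 K _⟩ ?_
          rintro r ⟨u, huK, hNu, rfl⟩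
          have : dotp u (projK K y) = dotp u y := by
            refine Finset.sum_congr rfl ?_
            intro j _
            by_cases hj : j ∈ K
            · simp [projK, hj]
            · simp [projK, hj, huK j hj]
          rw [this]
          exact le_trans (hy u) hNu
        refine le_csSup (coord_bdd l hl x) ⟨y, hdual, hxy.symm⟩
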